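/- Assume the PACA setting with the Slater condition, and suppose the PACA sequence (xᵏ) is infinite (xᵏ ∉ C for all k). Then (xᵏ) is Fejér* monotone with respect to int(C), the interior of C: for every s ∈ int(C) there exists N(s) ∈ ℕ such that ‖xᵏ⁺¹ − s‖ ≤ ‖xᵏ − s‖ for all k ≥ N(s). -/

import Mathlib

open Filter
open scoped RealInnerProductSpace

set_option maxHeartbeats 2000000 in
theorem stmt_8 {n m : ℕ} (hm : 0 < m)
    (f : Fin m → EuclideanSpace ℝ (Fin n) → ℝ)
    (hconv : ∀ i, ConvexOn ℝ Set.univ (f i))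
    (xhat : EuclideanSpace ℝ (Fin n)) (hslater : ∀ i, f i xhat < 0)
    (ε : ℕ → ℝ) (hεpos : ∀ k, 0 < ε k) (hεanti : StrictAnti ε)
    (hεlim : Tendsto ε atTop (nhds 0))
    (x : ℕ → EuclideanSpace ℝ (Fin n))
    (u v : Fin m → ℕ → EuclideanSpace ℝ (Fin n))
    (w : ℕ → EuclideanSpace ℝ (Fin n))
    (hsub : ∀ i k, ∀ z, f i (x k) + ⟪u i k, z - x k⟫ ≤ f i z)
    (hune : ∀ i k, 0 < f i (x k) + ε k → u i k ≠ 0)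
    (hv : ∀ i k, v i k = (max 0 (f i (x k) + ε k) / ‖u i k‖ ^ 2) • u i k)
    (hw : ∀ k, w k = (m : ℝ)⁻¹ • ∑ i, v i k)
    (hstep0 : ∀ k, w k = 0 → x (k + 1) = x k)
    (hstep : ∀ k, w k ≠ 0 →
      x (k + 1) = x k - (((m : ℝ)⁻¹ * ∑ i, ‖v i k‖ ^ 2) / ‖w k‖ ^ 2) • w k)
    (hinfinite : ∀ k, ∃ i, 0 < f i (x k)) :
    ∀ s ∈ interior {z : EuclideanSpace ℝ (Fin n) | ∀ i, f i z ≤ 0},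
      ∃ N : ℕ, ∀ k ≥ N, ‖x (k + 1) - s‖ ≤ ‖x k - s‖ := by
  intro s hs
  classical
  haveI : Nonempty (Fin m) := ⟨⟨0, hm⟩⟩
  obtain ⟨δ, hδpos, hball⟩ := Metric.isOpen_iff.1 isOpen_interior s hs
  have hCmem : ∀ z ∈ Metric.ball s δ, ∀ i, f i z ≤ 0 := fun z hz i =>
    (interior_subset (hball hz)) i
  -- Step 1: f i s < 0 for every i
  have hfs : ∀ i, f i s < 0 := by
    intro i
    by_contra h
    push_neg at h
    have hs0 : f i s = 0 := le_antisymm (hCmem s (Metric.mem_ball_self hδpos) i) h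
    set t : ℝ := δ / (2 * (‖s - xhat‖ + 1)) with ht
    have htpos : 0 < t := by positivity
    set y := s + t • (s - xhat) with hy
    have hyball : y ∈ Metric.ball s δ := by
      rw [Metric.mem_ball, dist_eq_norm]
      have h1 : y - s = t • (s - xhat) := by rw [hy]; abel
      rw [h1, norm_smul, Real.norm_eq_abs, abs_of_pos htpos]
      have hlt : t * ‖s - xhat‖ < t * (2 * (‖s - xhat‖ + 1)) := by
        apply mul_lt_mul_of_pos_left _ htpos
        nlinarith [norm_nonneg (s - xhat)]
      calc t * ‖s - xhat‖ < t * (2 * (‖s - xhat‖ + 1)) := hlt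
        _ = δ := by rw [ht]; field_simp
    have h1t : (0:ℝ) < 1 + t := by linarith
    have h1t' : (1 + t) ≠ 0 := ne_of_gt h1t
    have hcomb : (1/(1+t)) • y + (t/(1+t)) • xhat = s := by
      rw [hy]
      match_scalars <;> field_simp <;> ring
    have hcvx := (hconv i).2 (Set.mem_univ y) (Set.mem_univ xhat)
      (by positivity : (0:ℝ) ≤ 1/(1+t)) (by positivity : (0:ℝ) ≤ t/(1+t))
      (by field_simp : 1/(1+t) + t/(1+t) = 1)
    rw [hcomb, hs0] at hcvx
    simp only [smul_eq_mul] at hcvx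
    have hfy : f i y ≤ 0 := hCmem y hyball i
    have hxh : f i xhat < 0 := hslater i
    have hc1 : (0:ℝ) < 1/(1+t) := by positivity
    have hc2 : (0:ℝ) < t/(1+t) := by positivity
    nlinarith
  -- Step 2: δ' = min_i (-(f i s)) > 0
  set δ' := Finset.univ.inf' Finset.univ_nonempty (fun i => -(f i s)) with hδ'
  have hδ'pos : 0 < δ' := by
    rw [hδ', Finset.lt_inf'_iff]
    intro i _
    linarith [hfs i]
  have hδ'le : ∀ i, δ' ≤ -(f i s) := fun i =>
    Finset.inf'_le (fun j => -(f j s)) (Finset.mem_univ i)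
  obtain ⟨N, hN⟩ := eventually_atTop.1 (hεlim.eventually (gt_mem_nhds hδ'pos))
  refine ⟨N, fun k hk => ?_⟩
  by_cases hwk : w k = 0
  · rw [hstep0 k hwk]
  · have hεk : ε k < δ' := hN k hk
    -- key per-coordinate estimate
    have hkey : ∀ i, ‖v i k‖^2 ≤ ⟪v i k, x k - s⟫ := by
      intro i
      rcases le_or_gt (f i (x k) + ε k) 0 with hle | hlt
      · have hv0 : v i k = 0 := by rw [hv, max_eq_left hle]; simp
        simp [hv0]
      · have hu : u i k ≠ 0 := hune i k hlt
        have hun : (0:ℝ) < ‖u i k‖ := norm_pos_iff.2 hu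
        have hfsle : f i s ≤ -ε k := by
          have := hδ'le i
          linarith
        have hinner : f i (x k) + ε k ≤ ⟪u i k, x k - s⟫ := by
          have hsubs := hsub i k s
          have h1 : ⟪u i k, s - x k⟫ = -⟪u i k, x k - s⟫ := by
            rw [← inner_neg_right]
            congr 1
            abel
          rw [h1] at hsubs
          linarith
        set c : ℝ := f i (x k) + ε k with hc
        set nu : ℝ := ‖u i k‖ with hnu
        have hnu2 : nu^2 ≠ 0 := by positivity
        have hr : (0:ℝ) < c / nu^2 := by positivity
        have hrc : (c / nu^2) * nu^2 = c := div_mul_cancel₀ _ hnu2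
        rw [hv, max_eq_right hlt.le]
        calc ‖(c / nu^2) • u i k‖^2
            = (c / nu^2) * ((c / nu^2) * nu^2) := by
              rw [norm_smul, Real.norm_eq_abs, abs_of_pos hr, ← hnu]; ring
          _ = (c / nu^2) * c := by rw [hrc]
          _ ≤ (c / nu^2) * ⟪u i k, x k - s⟫ :=
              mul_le_mul_of_nonneg_left hinner hr.le
          _ = ⟪(c / nu^2) • u i k, x k - s⟫ :=
              (real_inner_smul_left _ _ _).symm
    have hwin : (m:ℝ)⁻¹ * ∑ i, ‖v i k‖^2 ≤ ⟪w k, x k - s⟫ := by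
      rw [hw k, real_inner_smul_left, sum_inner]
      exact mul_le_mul_of_nonneg_left (Finset.sum_le_sum fun i _ => hkey i)
        (by positivity)
    rw [hstep k hwk]
    have hwnp : (0:ℝ) < ‖w k‖ := norm_pos_iff.2 hwk
    set β := (m:ℝ)⁻¹ * ∑ i, ‖v i k‖^2 with hβ
    have hβnn : 0 ≤ β := by
      rw [hβ]
      exact mul_nonneg (inv_nonneg.2 (Nat.cast_nonneg m))
        (Finset.sum_nonneg fun i _ => sq_nonneg _)
    set α := β / ‖w k‖^2 with hα
    have hαnn : 0 ≤ α := by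
      rw [hα]
      exact div_nonneg hβnn (sq_nonneg _)
    have hαw : α * ‖w k‖^2 = β := by
      rw [hα]
      exact div_mul_cancel₀ _ (by positivity)
    have hexp : ‖x k - α • w k - s‖^2
        = ‖x k - s‖^2 - 2*(α*⟪x k - s, w k⟫) + α^2*‖w k‖^2 := by
      have h2 : x k - α • w k - s = (x k - s) - α • w k := by abel
      rw [h2, @norm_sub_sq_real, real_inner_smul_right, norm_smul,
        Real.norm_eq_abs, mul_pow, sq_abs]
    have hsq : ‖x k - α • w k - s‖^2 ≤ ‖x k - s‖^2 := by
      rw [hexp, real_inner_comm (w k) (x k - s)]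
      have h3 : α^2 * ‖w k‖^2 = α * β := by rw [← hαw]; ring
      have h4 : α * β ≤ α * ⟪w k, x k - s⟫ := mul_le_mul_of_nonneg_left hwin hαnn
      have h5 : 0 ≤ α * β := mul_nonneg hαnn hβnn
      linarith
    exact (pow_le_pow_iff_left₀ (norm_nonneg _) (norm_nonneg _) two_ne_zero).1 hsq
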